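/- For a 3-tournament T on n vertices (n ≥ 2), the column space of its incidence matrix has rank at most C(n,2) − n + 1. -/

import Mathlib

/-- The signed indicator of the directed edge `u → v`, as a (skew-symmetric) function on
ordered pairs of vertices: entry `+1` at `(u, v)`, `-1` at `(v, u)`, `0` elsewhere.
A vector indexed by 2-sets `{i < j}` with entry `+1` for an induced edge `i → j` and `-1`
for `j → i` is recorded by its values on ordered pairs. -/
def edgeVec {V : Type*} [DecidableEq V] (u v : V) : V → V → ℝ := fun i j =>
  (if i = u ∧ j = v then 1 else 0) - (if i = v ∧ j = u then 1 else 0)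

/-- The signed incidence vector of the oriented triple `→abc`, which induces the directed
edges `a → b`, `b → c`, `c → a`. -/
def incVec {V : Type*} [DecidableEq V] (a b c : V) : V → V → ℝ :=
  edgeVec a b + edgeVec b c + edgeVec c a

/-- Vertices are `Fin n`; an (oriented) triple is recorded as an ordered triple. -/
abbrev Triple (n : ℕ) := Fin n × Fin n × Fin n

/-- The ordered triple `(a, b, c)` is sorted: `a < b < c`. -/
def Sorted3 {n : ℕ} (p : Triple n) : Prop := p.1 < p.2.1 ∧ p.2.1 < p.2.2

instance {n : ℕ} : DecidablePred (Sorted3 (n := n)) := fun _ => instDecidableAnd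

/-- An orientation function `ω` assigns to each (sorted) triple one of its two cyclic
orientations: `true` for `→abc`, `false` for `→acb`.  The incidence vector of the triple
`{a, b, c}` under this orientation. -/
def oVec {n : ℕ} (ω : Triple n → Bool) (p : Triple n) : Fin n → Fin n → ℝ :=
  if ω p then incVec p.1 p.2.1 p.2.2 else incVec p.1 p.2.2 p.2.1

/-- `C` is a cycle of the oriented 3-graph with (sorted) triple set `D` and orientation `ω`:
a nonempty subset of `D` admitting strictly positive weights whose weighted incidence
vectors sum to zero. -/
def IsCycle {n : ℕ} (ω : Triple n → Bool) (D : Finset (Triple n)) (C : Finset (Triple n)) :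
    Prop :=
  C.Nonempty ∧ C ⊆ D ∧
    ∃ α : Triple n → ℝ, (∀ p ∈ C, 0 < α p) ∧ ∑ p ∈ C, α p • oVec ω p = 0

/-- The triple set of the complete oriented 3-graph (3-tournament) on `n` vertices: all
sorted triples. -/
def allTriples (n : ℕ) : Finset (Triple n) := Finset.univ.filter Sorted3

/-- The column space of the incidence matrix of the 3-tournament on `n` vertices with
orientation `ω`: the span of the incidence vectors of all its oriented triples. -/
def colSpace {n : ℕ} (ω : Triple n → Bool) : Submodule ℝ (Fin n → Fin n → ℝ) :=
  Submodule.span ℝ (oVec ω '' {p | Sorted3 p})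

/-- For a 3-tournament `T` on `n ≥ 2` vertices, the column space of its incidence matrix
has rank at most `C(n,2) - n + 1`. -/

lemma incVec_eq_three {V : Type*} [DecidableEq V] (z a b c : V) :
    incVec a b c = incVec z a b + incVec z b c - incVec z a c := by
  funext i j
  simp only [incVec, edgeVec, Pi.add_apply, Pi.sub_apply]
  ring

lemma incVec_swap {V : Type*} [DecidableEq V] (a b c : V) :
    incVec a c b = -incVec a b c := by
  funext i j
  simp only [incVec, edgeVec, Pi.add_apply, Pi.neg_apply]
  ring

/-- `incVec 0 i j` packaged as a function on `Sym2 (Fin n)`. -/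
noncomputable def pairVec {n : ℕ} [NeZero n] (e : Sym2 (Fin n)) : Fin n → Fin n → ℝ :=
  Sym2.lift ⟨fun i j => incVec 0 (min i j) (max i j),
    fun i j => by simp only [inf_comm, sup_comm]⟩ e

lemma pairVec_mk {n : ℕ} [NeZero n] {i j : Fin n} (h : i ≤ j) :
    pairVec s(i, j) = incVec 0 i j := by
  simp only [pairVec, Sym2.lift_mk]
  rw [min_eq_left h, max_eq_right h]

theorem tournament_rank_le (n : ℕ) (hn : 2 ≤ n) (ω : Triple n → Bool) :
    Module.finrank ℝ (colSpace ω) ≤ n.choose 2 - n + 1 := by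
  classical
  have hnpos : 0 < n := by omega
  haveI : NeZero n := ⟨by omega⟩
  set E : Finset (Sym2 (Fin n)) :=
    ((Finset.univ.erase (0 : Fin n)).offDiag.image Sym2.mk.uncurry) with hE
  set B : Finset (Fin n → Fin n → ℝ) := E.image pairVec with hB
  have hmem : ∀ i j : Fin n, i ≠ 0 → i < j → incVec 0 i j ∈ (B : Set _) := by
    intro i j hi hij
    have hj : j ≠ 0 := by
      intro h; subst h; exact absurd (hij.trans_le (Fin.zero_le i)) (lt_irrefl _)
    have : s(i, j) ∈ E := by
      refine Finset.mem_image.2 ⟨(i, j), ?_, rfl⟩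
      simp [Finset.mem_offDiag, hi, hj, hij.ne]
    rw [← pairVec_mk hij.le]
    exact Finset.mem_coe.2 (Finset.mem_image_of_mem _ this)
  have hle : colSpace ω ≤ Submodule.span ℝ (B : Set (Fin n → Fin n → ℝ)) := by
    rw [colSpace, Submodule.span_le]
    rintro _ ⟨p, hp, rfl⟩
    obtain ⟨a, b, c⟩ := p
    obtain ⟨hab, hbc⟩ : a < b ∧ b < c := hp
    have hbc0 : incVec (0 : Fin n) b c ∈ Submodule.span ℝ (B : Set _) :=
      Submodule.subset_span (hmem b c (by
        intro h; subst h; exact absurd (Fin.zero_le a) hab.not_ge) hbc)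
    have hmain : incVec a b c ∈ Submodule.span ℝ (B : Set _) := by
      by_cases ha : a = 0
      · subst ha; exact hbc0
      · rw [incVec_eq_three 0 a b c]
        have h1 : incVec 0 a b ∈ Submodule.span ℝ (B : Set _) :=
          Submodule.subset_span (hmem a b ha hab)
        have h2 : incVec 0 a c ∈ Submodule.span ℝ (B : Set _) :=
          Submodule.subset_span (hmem a c ha (hab.trans hbc))
        exact sub_mem (add_mem h1 hbc0) h2
    by_cases hω : ω (a, b, c)
    · simpa [oVec, hω] using hmain
    · show oVec ω (a, b, c) ∈ Submodule.span ℝ (B : Set _)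
      rw [oVec, if_neg hω, incVec_swap]
      exact Submodule.neg_mem _ hmain
  have h1 : Module.finrank ℝ (colSpace ω) ≤
      Module.finrank ℝ (Submodule.span ℝ (B : Set (Fin n → Fin n → ℝ))) :=
    Submodule.finrank_mono hle
  have h2 := finrank_span_finset_le_card (R := ℝ) B
  have h3 : B.card ≤ E.card := Finset.card_image_le
  have h4 : E.card = (n - 1).choose 2 := by
    rw [hE, Sym2.card_image_offDiag, Finset.card_erase_of_mem (Finset.mem_univ _),
      Finset.card_univ, Fintype.card_fin]
  have h5 : (n - 1).choose 2 ≤ n.choose 2 - n + 1 := by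
    obtain ⟨m, rfl⟩ : ∃ m, n = m + 2 := ⟨n - 2, by omega⟩
    have : (m + 2).choose 2 = (m + 1) + (m + 1).choose 2 := by
      rw [Nat.choose_succ_succ' (m + 1) 1, Nat.choose_one_right]
    have hr : m + 2 - 1 = m + 1 := rfl
    rw [hr]
    omega
  calc Module.finrank ℝ (colSpace ω) ≤ B.card := h1.trans h2
    _ ≤ n.choose 2 - n + 1 := by omega
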